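/- For all integers n ≥ 2 and 1 ≤ k ≤ n − 1 there exist unique unital R-algebra homomorphisms ψ_L : Ĥ_k → Ĥ_n and ψ_R : Ĥ_{n−k} → Ĥ_n such that: ψ_L(T_i) = T_i for all 1 ≤ i ≤ k − 1, ψ_L(T_0) = T_k⁻¹ T_{k+1}⁻¹ ⋯ T_{n−1}⁻¹ T_0 T_{n−1} ⋯ T_{k+1} T_k when k ≥ 2, and ψ_L(ρ) = ρ T_{n−1} T_{n−2} ⋯ T_k; and ψ_R(T_j) = T_{k+j} for all 1 ≤ j ≤ n − k − 1, ψ_R(T_0) = T_0 T_1 ⋯ T_{k−1} T_k T_{k−1}⁻¹ ⋯ T_1⁻¹ T_0⁻¹ when n − k ≥ 2, and ψ_R(ρ) = T_k⁻¹ T_{k−1}⁻¹ ⋯ T_1⁻¹ ρ. -/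

import Mathlib

/-!
Statement 6: existence and uniqueness of the parabolic embeddings `ψ_L` and `ψ_R`
for extended affine Hecke algebras.
-/

noncomputable section

namespace ParabolicInduction

/-- The ground ring `R = ℤ[q, q⁻¹]`. -/
abbrev R : Type := LaurentPolynomial ℤ

/-- The element `q ∈ R`. -/
def qR : R := LaurentPolynomial.T 1

/-- The element `q⁻¹ ∈ R`. -/
def qRinv : R := LaurentPolynomial.T (-1)

/-- Generators of the extended affine Hecke algebra `Ĥ_n`:  the `T_i` (present only
when `2 ≤ n`) and `ρ`, `ρ⁻¹`.  For `n = 1` only `ρ^{±1}` remain, so that `Ĥ_1` is the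
Laurent polynomial algebra `R[ρ, ρ⁻¹]`. -/
inductive HGen (n : ℕ) : Type
  | T (i : Fin n) (h : 2 ≤ n) : HGen n
  | rho : HGen n
  | rhoInv : HGen n

/-- Cyclic successor `i ↦ i + 1 (mod n)` on `Fin n`. -/
def cyc {n : ℕ} (i : Fin n) : Fin n := ⟨((i : ℕ) + 1) % n, Nat.mod_lt _ i.pos⟩

/-- The defining relations of the extended affine Hecke algebra `Ĥ_n`. -/
inductive HRel (n : ℕ) : FreeAlgebra R (HGen n) → FreeAlgebra R (HGen n) → Prop
  | quad (i : Fin n) (h : 2 ≤ n) :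
      HRel n ((FreeAlgebra.ι R (HGen.T i h) + algebraMap R _ qR) *
        (FreeAlgebra.ι R (HGen.T i h) - algebraMap R _ qRinv)) 0
  | comm (i j : Fin n) (h : 2 < n)
      (h1 : ((i : ℕ) : ZMod n) - ((j : ℕ) : ZMod n) ≠ 1)
      (h2 : ((i : ℕ) : ZMod n) - ((j : ℕ) : ZMod n) ≠ -1) :
      HRel n (FreeAlgebra.ι R (HGen.T i h.le) * FreeAlgebra.ι R (HGen.T j h.le))
        (FreeAlgebra.ι R (HGen.T j h.le) * FreeAlgebra.ι R (HGen.T i h.le))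
  | braid (i : Fin n) (h : 2 < n) :
      HRel n
        (FreeAlgebra.ι R (HGen.T i h.le) * FreeAlgebra.ι R (HGen.T (cyc i) h.le) *
          FreeAlgebra.ι R (HGen.T i h.le))
        (FreeAlgebra.ι R (HGen.T (cyc i) h.le) * FreeAlgebra.ι R (HGen.T i h.le) *
          FreeAlgebra.ι R (HGen.T (cyc i) h.le))
  | rho_rhoInv : HRel n (FreeAlgebra.ι R HGen.rho * FreeAlgebra.ι R HGen.rhoInv) 1
  | rhoInv_rho : HRel n (FreeAlgebra.ι R HGen.rhoInv * FreeAlgebra.ι R HGen.rho) 1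
  | conj (i : Fin n) (h : 2 ≤ n) :
      HRel n
        (FreeAlgebra.ι R HGen.rho * FreeAlgebra.ι R (HGen.T i h) * FreeAlgebra.ι R HGen.rhoInv)
        (FreeAlgebra.ι R (HGen.T (cyc i) h))

/-- The extended affine Hecke algebra `Ĥ_n`, presented by generators and relations. -/
abbrev Hecke (n : ℕ) : Type := RingQuot (HRel n)

/-- The generator `T_i` of `Ĥ_n` (indices read modulo `n`). -/
def HT {n : ℕ} (h : 2 ≤ n) (i : ℕ) : Hecke n :=
  RingQuot.mkAlgHom R (HRel n)
    (FreeAlgebra.ι R (HGen.T ⟨i % n, Nat.mod_lt _ (by omega)⟩ h))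

/-- The generator `ρ` of `Ĥ_n`. -/
def Hrho (n : ℕ) : Hecke n := RingQuot.mkAlgHom R (HRel n) (FreeAlgebra.ι R HGen.rho)

/-- The generator `ρ⁻¹` of `Ĥ_n`. -/
def HrhoInv (n : ℕ) : Hecke n := RingQuot.mkAlgHom R (HRel n) (FreeAlgebra.ι R HGen.rhoInv)

/-- The element `T_i⁻¹ = T_i + q - q⁻¹` of `Ĥ_n`. -/
def HTinv {n : ℕ} (h : 2 ≤ n) (i : ℕ) : Hecke n :=
  HT h i + algebraMap R (Hecke n) (qR - qRinv)

/-- The descending ordered product `T_a T_{a-1} ⋯ T_b` (empty, i.e. `1`, if `b > a`). -/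
def Tdesc {n : ℕ} (h : 2 ≤ n) (a b : ℕ) : Hecke n :=
  (((List.range' b (a + 1 - b)).reverse).map (HT h)).prod

/-- The ascending ordered product `T_a T_{a+1} ⋯ T_b` (empty, i.e. `1`, if `b < a`). -/
def Tasc {n : ℕ} (h : 2 ≤ n) (a b : ℕ) : Hecke n :=
  ((List.range' a (b + 1 - a)).map (HT h)).prod

/-- The descending ordered product `T_a⁻¹ T_{a-1}⁻¹ ⋯ T_b⁻¹` (empty if `b > a`). -/
def TinvDesc {n : ℕ} (h : 2 ≤ n) (a b : ℕ) : Hecke n :=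
  (((List.range' b (a + 1 - b)).reverse).map (HTinv h)).prod

/-- The ascending ordered product `T_a⁻¹ T_{a+1}⁻¹ ⋯ T_b⁻¹` (empty if `b < a`). -/
def TinvAsc {n : ℕ} (h : 2 ≤ n) (a b : ℕ) : Hecke n :=
  ((List.range' a (b + 1 - a)).map (HTinv h)).prod

/-- The defining conditions for the left parabolic embedding `ψ_L : Ĥ_k → Ĥ_n`:
`ψ_L(T_i) = T_i` for `1 ≤ i ≤ k - 1`,
`ψ_L(T_0) = T_k⁻¹ ⋯ T_{n-1}⁻¹ T_0 T_{n-1} ⋯ T_k` (when `2 ≤ k`), and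
`ψ_L(ρ) = ρ T_{n-1} ⋯ T_k`. -/
def IsPsiL (n k : ℕ) (hn : 2 ≤ n) (f : Hecke k →ₐ[R] Hecke n) : Prop :=
  (∀ (hk : 2 ≤ k) (i : ℕ), 1 ≤ i → i ≤ k - 1 → f (HT hk i) = HT hn i) ∧
  (∀ hk : 2 ≤ k, f (HT hk 0) = TinvAsc hn k (n - 1) * HT hn 0 * Tdesc hn (n - 1) k) ∧
  f (Hrho k) = Hrho n * Tdesc hn (n - 1) k

/-- The defining conditions for the right parabolic embedding `ψ_R : Ĥ_m → Ĥ_n`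
(where `m = n - k`):
`ψ_R(T_j) = T_{k+j}` for `1 ≤ j ≤ m - 1`,
`ψ_R(T_0) = T_0 T_1 ⋯ T_{k-1} T_k T_{k-1}⁻¹ ⋯ T_1⁻¹ T_0⁻¹` (when `2 ≤ m`), and
`ψ_R(ρ) = T_k⁻¹ T_{k-1}⁻¹ ⋯ T_1⁻¹ ρ`. -/
def IsPsiR (n k m : ℕ) (hn : 2 ≤ n) (g : Hecke m →ₐ[R] Hecke n) : Prop :=
  (∀ (hm : 2 ≤ m) (j : ℕ), 1 ≤ j → j ≤ m - 1 → g (HT hm j) = HT hn (k + j)) ∧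
  (∀ hm : 2 ≤ m, g (HT hm 0) = Tasc hn 0 (k - 1) * HT hn k * TinvDesc hn (k - 1) 0) ∧
  g (Hrho m) = TinvDesc hn k 1 * Hrho n

/-! ### Basic facts -/

lemma qR_mul_qRinv : qR * qRinv = 1 := by
  rw [qR, qRinv, ← LaurentPolynomial.T_add]; norm_num [LaurentPolynomial.T_zero]

section BasicRel
variable {n : ℕ}

lemma HT_congr (h : 2 ≤ n) {i j : ℕ} (hij : i % n = j % n) : HT h i = HT h j := by
  have e : (⟨i % n, Nat.mod_lt _ (by omega)⟩ : Fin n) = ⟨j % n, Nat.mod_lt _ (by omega)⟩ :=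
    Fin.ext hij
  unfold HT
  rw [e]

lemma HT_mod (h : 2 ≤ n) (i : ℕ) : HT h i = HT h (i % n) :=
  HT_congr h (Nat.mod_mod_of_dvd i dvd_rfl).symm

lemma HT_fin (h : 2 ≤ n) (i : Fin n) :
    RingQuot.mkAlgHom R (HRel n) (FreeAlgebra.ι R (HGen.T i h)) = HT h (i : ℕ) := by
  have e : (⟨(i : ℕ) % n, Nat.mod_lt _ (by omega)⟩ : Fin n) = i :=
    Fin.ext (Nat.mod_eq_of_lt i.isLt)
  unfold HT
  rw [e]

lemma quad0 (h : 2 ≤ n) (i : ℕ) :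
    (HT h i + algebraMap R (Hecke n) qR) * (HT h i - algebraMap R (Hecke n) qRinv) = 0 := by
  have := RingQuot.mkAlgHom_rel R (HRel.quad (⟨i % n, Nat.mod_lt _ (by omega)⟩ : Fin n) h)
  simpa [map_mul, map_add, map_sub, HT] using this

lemma quad_trick {A : Type} [Ring A] (a c c' : A) (hc : c * a = a * c) (hc' : c' * a = a * c')
    (h1 : c * c' = 1) (h0 : (a + c) * (a - c') = 0) :
    a * (a + (c - c')) = 1 ∧ (a + (c - c')) * a = 1 := by
  rw [mul_sub, add_mul, add_mul, sub_eq_zero] at h0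
  rw [hc, h1] at h0
  constructor
  · rw [mul_add, mul_sub, ← add_sub_assoc, h0, add_sub_cancel_left]
  · rw [add_mul, sub_mul, hc, hc', ← add_sub_assoc, h0, add_sub_cancel_left]

lemma HT_mul_HTinv (h : 2 ≤ n) (i : ℕ) : HT h i * HTinv h i = 1 := by
  have h0 := quad0 h i
  have := quad_trick (HT h i) (algebraMap R (Hecke n) qR) (algebraMap R (Hecke n) qRinv)
    (Algebra.commutes qR _) (Algebra.commutes qRinv _)
    (by rw [← map_mul, qR_mul_qRinv, map_one]) h0
  rw [HTinv, map_sub]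
  exact this.1

lemma HTinv_mul_HT (h : 2 ≤ n) (i : ℕ) : HTinv h i * HT h i = 1 := by
  have h0 := quad0 h i
  have := quad_trick (HT h i) (algebraMap R (Hecke n) qR) (algebraMap R (Hecke n) qRinv)
    (Algebra.commutes qR _) (Algebra.commutes qRinv _)
    (by rw [← map_mul, qR_mul_qRinv, map_one]) h0
  rw [HTinv, map_sub]
  exact this.2

lemma rho_mul_rhoInv (n : ℕ) : Hrho n * HrhoInv n = 1 := by
  have := RingQuot.mkAlgHom_rel R (HRel.rho_rhoInv (n := n))
  simpa [map_mul, Hrho, HrhoInv] using this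

lemma rhoInv_mul_rho (n : ℕ) : HrhoInv n * Hrho n = 1 := by
  have := RingQuot.mkAlgHom_rel R (HRel.rhoInv_rho (n := n))
  simpa [map_mul, Hrho, HrhoInv] using this

lemma braid_nat (h : 2 < n) (i : ℕ) :
    HT h.le i * HT h.le (i + 1) * HT h.le i = HT h.le (i + 1) * HT h.le i * HT h.le (i + 1) := by
  have hcyc : cyc (⟨i % n, Nat.mod_lt _ (by omega)⟩ : Fin n) =
      ⟨(i + 1) % n, Nat.mod_lt _ (by omega)⟩ := by
    simp [cyc, Nat.mod_add_mod]
  have := RingQuot.mkAlgHom_rel R (HRel.braid (⟨i % n, Nat.mod_lt _ (by omega)⟩ : Fin n) h)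
  rw [hcyc] at this
  simpa [map_mul, HT] using this

lemma conj_nat (h : 2 ≤ n) (i : ℕ) :
    Hrho n * HT h i * HrhoInv n = HT h (i + 1) := by
  have hcyc : cyc (⟨i % n, Nat.mod_lt _ (by omega)⟩ : Fin n) =
      ⟨(i + 1) % n, Nat.mod_lt _ (by omega)⟩ := by
    simp [cyc, Nat.mod_add_mod]
  have := RingQuot.mkAlgHom_rel R (HRel.conj (⟨i % n, Nat.mod_lt _ (by omega)⟩ : Fin n) h)
  rw [hcyc] at this
  simpa [map_mul, HT, Hrho, HrhoInv] using this

lemma cast_inj_aux {a b : ℕ} (ha : a < n) (hb : b < n) (he : (a : ZMod n) = (b : ZMod n)) :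
    a = b := by
  have := (ZMod.natCast_eq_natCast_iff _ _ _).mp he
  rwa [Nat.ModEq, Nat.mod_eq_of_lt ha, Nat.mod_eq_of_lt hb] at this

lemma Tcomm (h : 2 < n) {i j : ℕ} (hi : i < n) (hj : j < n)
    (h1 : i + 2 ≤ j) (h2 : j + 2 ≤ i + n) :
    Commute (HT h.le i) (HT h.le j) := by
  have h1' : ((i % n : ℕ) : ZMod n) - ((j % n : ℕ) : ZMod n) ≠ 1 := by
    rw [ZMod.natCast_mod, ZMod.natCast_mod]
    intro he
    have he' : (i : ZMod n) = (((j + 1) % n : ℕ) : ZMod n) := by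
      rw [ZMod.natCast_mod]; push_cast; linear_combination he
    have heq := cast_inj_aux hi (Nat.mod_lt _ (by omega)) he'
    rcases Nat.lt_or_ge (j + 1) n with hlt | hge
    · rw [Nat.mod_eq_of_lt hlt] at heq; omega
    · have hn1 : j + 1 = n := by omega
      rw [hn1, Nat.mod_self] at heq; omega
  have h2' : ((i % n : ℕ) : ZMod n) - ((j % n : ℕ) : ZMod n) ≠ -1 := by
    rw [ZMod.natCast_mod, ZMod.natCast_mod]
    intro he
    have he' : (j : ZMod n) = (((i + 1) % n : ℕ) : ZMod n) := by
      rw [ZMod.natCast_mod]; push_cast; linear_combination -he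
    have heq := cast_inj_aux hj (Nat.mod_lt _ (by omega)) he'
    rcases Nat.lt_or_ge (i + 1) n with hlt | hge
    · rw [Nat.mod_eq_of_lt hlt] at heq; omega
    · have hn1 : i + 1 = n := by omega
      rw [hn1, Nat.mod_self] at heq; omega
  have := RingQuot.mkAlgHom_rel R
    (HRel.comm (⟨i % n, Nat.mod_lt _ (by omega)⟩ : Fin n)
      (⟨j % n, Nat.mod_lt _ (by omega)⟩ : Fin n) h h1' h2')
  simpa [map_mul, HT, Commute, SemiconjBy] using this

end BasicRel
/-! ### Product machinery -/

section Products
variable {n : ℕ}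

lemma Tdesc_nil (h : 2 ≤ n) {a b : ℕ} (hab : a < b) : Tdesc h a b = 1 := by
  unfold Tdesc
  rw [show a + 1 - b = 0 by omega]
  simp

lemma Tasc_nil (h : 2 ≤ n) {a b : ℕ} (hab : b < a) : Tasc h a b = 1 := by
  unfold Tasc
  rw [show b + 1 - a = 0 by omega]
  simp

lemma TinvAsc_nil (h : 2 ≤ n) {a b : ℕ} (hab : b < a) : TinvAsc h a b = 1 := by
  unfold TinvAsc
  rw [show b + 1 - a = 0 by omega]
  simp

lemma TinvDesc_nil (h : 2 ≤ n) {a b : ℕ} (hab : a < b) : TinvDesc h a b = 1 := by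
  unfold TinvDesc
  rw [show a + 1 - b = 0 by omega]
  simp

lemma Tdesc_single (h : 2 ≤ n) (a : ℕ) : Tdesc h a a = HT h a := by
  unfold Tdesc
  rw [show a + 1 - a = 1 by omega]
  simp

lemma Tasc_single (h : 2 ≤ n) (a : ℕ) : Tasc h a a = HT h a := by
  unfold Tasc
  rw [show a + 1 - a = 1 by omega]
  simp

lemma TinvAsc_single (h : 2 ≤ n) (a : ℕ) : TinvAsc h a a = HTinv h a := by
  unfold TinvAsc
  rw [show a + 1 - a = 1 by omega]
  simp

lemma TinvDesc_single (h : 2 ≤ n) (a : ℕ) : TinvDesc h a a = HTinv h a := by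
  unfold TinvDesc
  rw [show a + 1 - a = 1 by omega]
  simp

-- cons/concat lemmas
lemma Tdesc_cons (h : 2 ≤ n) {a b : ℕ} (hab : b ≤ a + 1) :
    Tdesc h (a + 1) b = HT h (a + 1) * Tdesc h a b := by
  unfold Tdesc
  rw [show a + 1 + 1 - b = (a + 1 - b) + 1 by omega, List.range'_1_concat,
    show b + (a + 1 - b) = a + 1 by omega, List.reverse_append, List.map_append, List.prod_append]
  simp

lemma Tdesc_snoc (h : 2 ≤ n) {a b : ℕ} (hab : b ≤ a) :
    Tdesc h a b = Tdesc h a (b + 1) * HT h b := by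
  unfold Tdesc
  rw [show a + 1 - b = (a - b) + 1 by omega, List.range'_succ, List.reverse_cons,
    List.map_append, List.prod_append, show a + 1 - (b + 1) = a - b by omega]
  simp

lemma Tasc_cons (h : 2 ≤ n) {a b : ℕ} (hab : a ≤ b) :
    Tasc h a b = HT h a * Tasc h (a + 1) b := by
  unfold Tasc
  rw [show b + 1 - a = (b - a) + 1 by omega, List.range'_succ,
    show b + 1 - (a + 1) = b - a by omega]
  simp

lemma Tasc_snoc (h : 2 ≤ n) {a b : ℕ} (hab : a ≤ b + 1) :
    Tasc h a (b + 1) = Tasc h a b * HT h (b + 1) := by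
  unfold Tasc
  rw [show b + 1 + 1 - a = (b + 1 - a) + 1 by omega, List.range'_1_concat,
    show a + (b + 1 - a) = b + 1 by omega, List.map_append, List.prod_append]
  simp

lemma TinvAsc_cons (h : 2 ≤ n) {a b : ℕ} (hab : a ≤ b) :
    TinvAsc h a b = HTinv h a * TinvAsc h (a + 1) b := by
  unfold TinvAsc
  rw [show b + 1 - a = (b - a) + 1 by omega, List.range'_succ,
    show b + 1 - (a + 1) = b - a by omega]
  simp

lemma TinvAsc_snoc (h : 2 ≤ n) {a b : ℕ} (hab : a ≤ b + 1) :
    TinvAsc h a (b + 1) = TinvAsc h a b * HTinv h (b + 1) := by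
  unfold TinvAsc
  rw [show b + 1 + 1 - a = (b + 1 - a) + 1 by omega, List.range'_1_concat,
    show a + (b + 1 - a) = b + 1 by omega, List.map_append, List.prod_append]
  simp

lemma TinvDesc_cons (h : 2 ≤ n) {a b : ℕ} (hab : b ≤ a + 1) :
    TinvDesc h (a + 1) b = HTinv h (a + 1) * TinvDesc h a b := by
  unfold TinvDesc
  rw [show a + 1 + 1 - b = (a + 1 - b) + 1 by omega, List.range'_1_concat,
    show b + (a + 1 - b) = a + 1 by omega, List.reverse_append, List.map_append, List.prod_append]
  simp

lemma TinvDesc_snoc (h : 2 ≤ n) {a b : ℕ} (hab : b ≤ a) :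
    TinvDesc h a b = TinvDesc h a (b + 1) * HTinv h b := by
  unfold TinvDesc
  rw [show a + 1 - b = (a - b) + 1 by omega, List.range'_succ, List.reverse_cons,
    List.map_append, List.prod_append, show a + 1 - (b + 1) = a - b by omega]
  simp

-- generic inverse-pair lemma
lemma list_pair {A : Type} [Monoid A] (f g : ℕ → A) (hfg : ∀ i, f i * g i = 1)
    (l : List ℕ) : (l.map f).prod * ((l.reverse).map g).prod = 1 := by
  induction l with
  | nil => simp
  | cons a l ih =>
    rw [List.map_cons, List.prod_cons, List.reverse_cons, List.map_append, List.prod_append,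
      mul_assoc, ← mul_assoc (l.map f).prod, ih]
    simp [hfg a]

lemma TinvAsc_mul_Tdesc (h : 2 ≤ n) (a b : ℕ) : TinvAsc h a b * Tdesc h b a = 1 := by
  unfold TinvAsc Tdesc
  exact list_pair _ _ (HTinv_mul_HT h) _

lemma Tdesc_mul_TinvAsc (h : 2 ≤ n) (a b : ℕ) : Tdesc h b a * TinvAsc h a b = 1 := by
  unfold TinvAsc Tdesc
  have := list_pair (HT h) (HTinv h) (HT_mul_HTinv h) (List.range' a (b + 1 - a)).reverse
  rwa [List.reverse_reverse] at this

lemma Tasc_mul_TinvDesc (h : 2 ≤ n) (a b : ℕ) : Tasc h a b * TinvDesc h b a = 1 := by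
  unfold Tasc TinvDesc
  exact list_pair _ _ (HT_mul_HTinv h) _

lemma TinvDesc_mul_Tasc (h : 2 ≤ n) (a b : ℕ) : TinvDesc h b a * Tasc h a b = 1 := by
  unfold Tasc TinvDesc
  have := list_pair (HTinv h) (HT h) (HTinv_mul_HT h) (List.range' a (b + 1 - a)).reverse
  rwa [List.reverse_reverse] at this

-- units
/-- `Tdesc` as a unit. -/
def uTdesc (h : 2 ≤ n) (a b : ℕ) : (Hecke n)ˣ :=
  ⟨Tdesc h a b, TinvAsc h b a, Tdesc_mul_TinvAsc h b a, TinvAsc_mul_Tdesc h b a⟩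

/-- `Tasc` as a unit. -/
def uTasc (h : 2 ≤ n) (a b : ℕ) : (Hecke n)ˣ :=
  ⟨Tasc h a b, TinvDesc h b a, Tasc_mul_TinvDesc h a b, TinvDesc_mul_Tasc h a b⟩

/-- `HT` as a unit. -/
def uT (h : 2 ≤ n) (i : ℕ) : (Hecke n)ˣ :=
  ⟨HT h i, HTinv h i, HT_mul_HTinv h i, HTinv_mul_HT h i⟩

/-- `ρ` as a unit. -/
def uRho (n : ℕ) : (Hecke n)ˣ :=
  ⟨Hrho n, HrhoInv n, rho_mul_rhoInv n, rhoInv_mul_rho n⟩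

-- commuting with products
lemma commute_Tdesc (h : 2 ≤ n) (c : Hecke n) {a b : ℕ}
    (H : ∀ i, b ≤ i → i ≤ a → Commute c (HT h i)) : Commute c (Tdesc h a b) := by
  unfold Tdesc
  refine Commute.list_prod_right _ _ ?_
  intro x hx
  simp only [List.mem_map, List.mem_reverse, List.mem_range'_1] at hx
  obtain ⟨i, ⟨h1, h2⟩, rfl⟩ := hx
  exact H i h1 (by omega)

lemma commute_Tasc (h : 2 ≤ n) (c : Hecke n) {a b : ℕ}
    (H : ∀ i, a ≤ i → i ≤ b → Commute c (HT h i)) : Commute c (Tasc h a b) := by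
  unfold Tasc
  refine Commute.list_prod_right _ _ ?_
  intro x hx
  simp only [List.mem_map, List.mem_range'_1] at hx
  obtain ⟨i, ⟨h1, h2⟩, rfl⟩ := hx
  exact H i h1 (by omega)

lemma commute_HTinv (h : 2 ≤ n) {c : Hecke n} {i : ℕ} (hc : Commute c (HT h i)) :
    Commute c (HTinv h i) := by
  rw [HTinv]
  exact hc.add_right (Algebra.commutes _ c).symm

lemma commute_TinvAsc (h : 2 ≤ n) (c : Hecke n) {a b : ℕ}
    (H : ∀ i, a ≤ i → i ≤ b → Commute c (HT h i)) : Commute c (TinvAsc h a b) := by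
  unfold TinvAsc
  refine Commute.list_prod_right _ _ ?_
  intro x hx
  simp only [List.mem_map, List.mem_range'_1] at hx
  obtain ⟨i, ⟨h1, h2⟩, rfl⟩ := hx
  exact commute_HTinv h (H i h1 (by omega))

lemma commute_TinvDesc (h : 2 ≤ n) (c : Hecke n) {a b : ℕ}
    (H : ∀ i, b ≤ i → i ≤ a → Commute c (HT h i)) : Commute c (TinvDesc h a b) := by
  unfold TinvDesc
  refine Commute.list_prod_right _ _ ?_
  intro x hx
  simp only [List.mem_map, List.mem_reverse, List.mem_range'_1] at hx
  obtain ⟨i, ⟨h1, h2⟩, rfl⟩ := hx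
  exact commute_HTinv h (H i h1 (by omega))

-- rho conjugation of products
lemma rho_conj_list (f : ℕ → Hecke n) (hf : ∀ i, Hrho n * f i * HrhoInv n = f (i + 1))
    (l : List ℕ) :
    Hrho n * (l.map f).prod * HrhoInv n = (l.map (fun i => f (i + 1))).prod := by
  induction l with
  | nil => simpa using rho_mul_rhoInv n
  | cons a l ih =>
    rw [List.map_cons, List.prod_cons, List.map_cons, List.prod_cons, ← ih, ← hf a]
    have h1 := rhoInv_mul_rho n
    calc Hrho n * (f a * (l.map f).prod) * HrhoInv n
        = Hrho n * f a * ((HrhoInv n * Hrho n) * (l.map f).prod) * HrhoInv n := by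
          rw [h1, one_mul, mul_assoc, mul_assoc, mul_assoc, mul_assoc]
      _ = Hrho n * f a * HrhoInv n * (Hrho n * (l.map f).prod * HrhoInv n) := by
          simp only [mul_assoc]

lemma map_range'_shift (f : ℕ → Hecke n) (b len : ℕ) :
    (List.range' b len).map (fun i => f (i + 1)) = (List.range' (b + 1) len).map f := by
  induction len generalizing b with
  | zero => simp
  | succ m ih => rw [List.range'_succ, List.range'_succ, List.map_cons, List.map_cons, ih]

lemma rho_HT (h : 2 ≤ n) (i : ℕ) : Hrho n * HT h i = HT h (i + 1) * Hrho n := by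
  have := conj_nat h i
  calc Hrho n * HT h i = Hrho n * HT h i * (HrhoInv n * Hrho n) := by
        rw [rhoInv_mul_rho, mul_one]
    _ = (Hrho n * HT h i * HrhoInv n) * Hrho n := by simp only [mul_assoc]
    _ = HT h (i + 1) * Hrho n := by rw [this]

lemma rho_HTinv (h : 2 ≤ n) (i : ℕ) :
    Hrho n * HTinv h i * HrhoInv n = HTinv h (i + 1) := by
  unfold HTinv
  rw [mul_add, add_mul, conj_nat h i]
  congr 1
  calc Hrho n * algebraMap R (Hecke n) (qR - qRinv) * HrhoInv n
      = algebraMap R (Hecke n) (qR - qRinv) * (Hrho n * HrhoInv n) := by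
        rw [← Algebra.commutes (qR - qRinv) (Hrho n), mul_assoc]
    _ = _ := by rw [rho_mul_rhoInv, mul_one]

lemma rho_conj_Tdesc (h : 2 ≤ n) (a b : ℕ) :
    Hrho n * Tdesc h a b * HrhoInv n = Tdesc h (a + 1) (b + 1) := by
  unfold Tdesc
  rw [show a + 1 + 1 - (b + 1) = a + 1 - b by omega]
  rw [rho_conj_list _ (conj_nat h) ((List.range' b (a + 1 - b)).reverse)]
  congr 1
  simp only [List.map_reverse]
  rw [map_range'_shift]

lemma rho_conj_Tasc (h : 2 ≤ n) (a b : ℕ) :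
    Hrho n * Tasc h a b * HrhoInv n = Tasc h (a + 1) (b + 1) := by
  unfold Tasc
  rw [show b + 1 + 1 - (a + 1) = b + 1 - a by omega, ← map_range'_shift]
  exact rho_conj_list _ (conj_nat h) _

lemma rho_conj_TinvAsc (h : 2 ≤ n) (a b : ℕ) :
    Hrho n * TinvAsc h a b * HrhoInv n = TinvAsc h (a + 1) (b + 1) := by
  unfold TinvAsc
  rw [show b + 1 + 1 - (a + 1) = b + 1 - a by omega, ← map_range'_shift]
  exact rho_conj_list _ (rho_HTinv h) _

lemma rho_conj_TinvDesc (h : 2 ≤ n) (a b : ℕ) :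
    Hrho n * TinvDesc h a b * HrhoInv n = TinvDesc h (a + 1) (b + 1) := by
  unfold TinvDesc
  rw [show a + 1 + 1 - (b + 1) = a + 1 - b by omega]
  rw [rho_conj_list _ (rho_HTinv h) ((List.range' b (a + 1 - b)).reverse)]
  congr 1
  simp only [List.map_reverse]
  rw [map_range'_shift]

end Products
/-! ### Key braid identities -/

section Braid
variable {n : ℕ}

lemma comm_swap {A : Type} [Semigroup A] {a b : A} (hc : Commute a b) (x : A) :
    a * (b * x) = b * (a * x) := by rw [← mul_assoc, hc.eq, mul_assoc]

lemma Tinv_T (h : 2 ≤ n) (i : ℕ) (x : Hecke n) : HTinv h i * (HT h i * x) = x := by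
  rw [← mul_assoc, HTinv_mul_HT, one_mul]

lemma T_Tinv (h : 2 ≤ n) (i : ℕ) (x : Hecke n) : HT h i * (HTinv h i * x) = x := by
  rw [← mul_assoc, HT_mul_HTinv, one_mul]

lemma rhoInv_rho_cancel (x : Hecke n) : HrhoInv n * (Hrho n * x) = x := by
  rw [← mul_assoc, rhoInv_mul_rho, one_mul]

lemma rho_rhoInv_cancel (x : Hecke n) : Hrho n * (HrhoInv n * x) = x := by
  rw [← mul_assoc, rho_mul_rhoInv, one_mul]

lemma Tinvcomm (h : 2 < n) {i j : ℕ} (hi : i < n) (hj : j < n)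
    (h1 : i + 2 ≤ j) (h2 : j + 2 ≤ i + n) :
    Commute (HTinv h.le i) (HT h.le j) :=
  (commute_HTinv h.le (Tcomm h hi hj h1 h2).symm).symm

lemma uBase (h : 2 < n) (a : ℕ) :
    HT h.le (a + 1) * (HT h.le a * HTinv h.le (a + 1)) =
      HTinv h.le a * (HT h.le (a + 1) * HT h.le a) := by
  have e := congrArg (fun z => HTinv h.le a * z * HTinv h.le (a + 1)) (braid_nat h a)
  simp only [mul_assoc] at e
  rw [Tinv_T] at e
  simp only [HT_mul_HTinv, mul_one] at e
  exact e

lemma vBase (h : 2 < n) (a : ℕ) :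
    HT h.le a * (HT h.le (a + 1) * HTinv h.le a) =
      HTinv h.le (a + 1) * (HT h.le a * HT h.le (a + 1)) := by
  have e := congrArg (fun z => HTinv h.le (a + 1) * z * HTinv h.le a) (braid_nat h a).symm
  simp only [mul_assoc] at e
  rw [Tinv_T] at e
  simp only [HT_mul_HTinv, mul_one] at e
  exact e

lemma uLemma (h : 2 < n) (d : ℕ) : ∀ a b : ℕ, b = a + 1 + d → b < n → b + 2 ≤ a + n →
    Tdesc h.le b (a + 1) * (HT h.le a * TinvAsc h.le (a + 1) b) =
      TinvAsc h.le a (b - 1) * (HT h.le b * Tdesc h.le (b - 1) a) := by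
  induction d with
  | zero =>
    intro a b hb _ _
    subst hb
    rw [show a + 1 + 0 = a + 1 from rfl, show a + 1 - 1 = a from rfl,
      Tdesc_single, TinvAsc_single, TinvAsc_single, Tdesc_single]
    exact uBase h a
  | succ d ih =>
    intro a b hb hbn hban
    have hab : a + 1 ≤ b := by omega
    rw [Tdesc_snoc h.le hab, TinvAsc_cons h.le hab]
    simp only [mul_assoc]
    have base' : ∀ x, HT h.le (a + 1) * (HT h.le a * (HTinv h.le (a + 1) * x)) =
        HTinv h.le a * (HT h.le (a + 1) * (HT h.le a * x)) := fun x => by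
      have := congrArg (· * x) (uBase h a)
      simpa only [mul_assoc] using this
    rw [base']
    have c2 : Commute (HT h.le a) (TinvAsc h.le (a + 2) b) :=
      commute_TinvAsc h.le _ fun j hj1 hj2 =>
        Tcomm h (by omega) (by omega) (by omega) (by omega)
    rw [c2.eq]
    have c1 : Commute (Tdesc h.le b (a + 2)) (HTinv h.le a) :=
      (commute_Tdesc h.le _ fun j hj1 hj2 =>
        (Tinvcomm h (by omega) (by omega) (by omega) (by omega) : Commute _ (HT h.le j))).symm
    rw [comm_swap c1]
    have ih' : ∀ x, Tdesc h.le b (a + 2) * (HT h.le (a + 1) * (TinvAsc h.le (a + 2) b * x)) =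
        TinvAsc h.le (a + 1) (b - 1) * (HT h.le b * (Tdesc h.le (b - 1) (a + 1) * x)) :=
      fun x => by
        have := congrArg (· * x) (ih (a + 1) b (by omega) hbn (by omega))
        simpa only [mul_assoc] using this
    rw [ih']
    rw [TinvAsc_cons h.le (show a ≤ b - 1 by omega), Tdesc_snoc h.le (show a ≤ b - 1 by omega)]
    simp only [mul_assoc]

lemma vLemma (h : 2 < n) (d : ℕ) : ∀ a b : ℕ, b = a + d → b + 1 < n → b + 3 ≤ a + n →
    Tasc h.le a b * (HT h.le (b + 1) * TinvDesc h.le b a) =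
      TinvDesc h.le (b + 1) (a + 1) * (HT h.le a * Tasc h.le (a + 1) (b + 1)) := by
  induction d with
  | zero =>
    intro a b hb _ _
    rw [show b = a by omega, Tasc_single, TinvDesc_single, TinvDesc_single, Tasc_single]
    exact vBase h a
  | succ d ih =>
    intro a b hb hbn hban
    have hab : a ≤ b := by omega
    have hab' : a < b := by omega
    rw [Tasc_cons h.le hab, TinvDesc_snoc h.le hab]
    simp only [mul_assoc]
    -- T_a * (Tasc (a+1) b * (T (b+1) * (TinvDesc b (a+1) * Tinv_a)))
    have ih' : ∀ x, Tasc h.le (a + 1) b * (HT h.le (b + 1) * (TinvDesc h.le b (a + 1) * x)) =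
        TinvDesc h.le (b + 1) (a + 2) * (HT h.le (a + 1) * (Tasc h.le (a + 2) (b + 1) * x)) :=
      fun x => by
        have := congrArg (· * x) (ih (a + 1) b (by omega) hbn (by omega))
        simpa only [mul_assoc] using this
    rw [ih']
    -- T_a * (TinvDesc (b+1) (a+2) * (T (a+1) * (Tasc (a+2) (b+1) * Tinv_a)))
    have c2 : Commute (Tasc h.le (a + 2) (b + 1)) (HTinv h.le a) :=
      (commute_Tasc h.le _ fun j hj1 hj2 =>
        (Tinvcomm h (by omega) (by omega) (by omega) (by omega) : Commute _ (HT h.le j))).symm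
    rw [c2.eq]
    -- T_a * (TinvDesc (b+1) (a+2) * (T (a+1) * (Tinv_a * Tasc (a+2) (b+1))))
    have c1 : Commute (HT h.le a) (TinvDesc h.le (b + 1) (a + 2)) :=
      commute_TinvDesc h.le _ fun j hj1 hj2 =>
        Tcomm h (i := a) (j := j) (by omega) (by omega) (by omega) (by omega)
    rw [comm_swap c1]
    -- TinvDesc (b+1) (a+2) * (T_a * (T (a+1) * (Tinv_a * Tasc (a+2) (b+1))))
    have base' : ∀ x, HT h.le a * (HT h.le (a + 1) * (HTinv h.le a * x)) =
        HTinv h.le (a + 1) * (HT h.le a * (HT h.le (a + 1) * x)) := fun x => by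
      have := congrArg (· * x) (vBase h a)
      simpa only [mul_assoc] using this
    rw [base']
    -- TinvDesc (b+1) (a+2) * (Tinv (a+1) * (T_a * (T (a+1) * Tasc (a+2) (b+1))))
    rw [TinvDesc_snoc h.le (show a + 1 ≤ b + 1 by omega),
      Tasc_cons h.le (show a + 1 ≤ b + 1 by omega)]
    simp only [mul_assoc]

end Braid
/-! ### Generic conjugation lemmas -/

section ConjGeneric
variable {A : Type} [Monoid A]

lemma cancel_mid {p q : A} (h : p * q = 1) (x : A) : p * (q * x) = x := by
  rw [← mul_assoc, h, one_mul]

lemma conj_braid (u v t x : A) (huv : u * v = 1) (hvu : v * u = 1)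
    (key : (v * t * u) * x * (v * t * u) = x * (v * t * u) * x) :
    t * (u * x * v) * t = (u * x * v) * t * (u * x * v) := by
  have e := congrArg (fun z => u * z * v) key
  simp only [mul_assoc] at e
  rw [cancel_mid huv] at e
  rw [huv, mul_one] at e
  simpa only [mul_assoc] using e

lemma conj_braid' (u v x y : A) (huv : u * v = 1) (hvu : v * u = 1)
    (hyu : y * u = u * y) (hyv : y * v = v * y)
    (key : x * y * x = y * x * y) :
    (u * x * v) * y * (u * x * v) = y * (u * x * v) * y := by
  have e := congrArg (fun z => u * z * v) key
  simp only [mul_assoc] at e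
  calc (u * x * v) * y * (u * x * v)
      = u * (x * (v * (y * (u * (x * v))))) := by simp only [mul_assoc]
    _ = u * (x * (y * (v * (u * (x * v))))) := by
        rw [comm_swap (show Commute v y from hyv.symm)]
    _ = u * (x * (y * (x * v))) := by rw [cancel_mid hvu]
    _ = u * (y * (x * (y * v))) := e
    _ = y * (u * (x * (y * v))) := by rw [comm_swap (show Commute u y from hyu.symm)]
    _ = y * (u * (x * (v * y))) := by rw [hyv]
    _ = y * (u * x * v) * y := by simp only [mul_assoc]

lemma conj_mul3 (p q a b c : A) (hqp : q * p = 1) :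
    p * (a * (b * c)) * q = (p * a * q) * ((p * b * q) * (p * c * q)) := by
  simp only [mul_assoc]
  rw [cancel_mid hqp, cancel_mid hqp]

end ConjGeneric

lemma conj_quad {A : Type} [Ring A] (u v t c c' : A) (huv : u * v = 1) (hvu : v * u = 1)
    (hc : ∀ x : A, c * x = x * c) (hc' : ∀ x : A, c' * x = x * c')
    (h0 : (t + c) * (t - c') = 0) :
    (u * t * v + c) * (u * t * v - c') = 0 := by
  have e1 : u * (t + c) * v = u * t * v + c := by
    rw [mul_add, add_mul, ← hc u, mul_assoc c u v, huv, mul_one]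
  have e2 : u * (t - c') * v = u * t * v - c' := by
    rw [mul_sub, sub_mul, ← hc' u, mul_assoc c' u v, huv, mul_one]
  rw [← e1, ← e2]
  have e3 : u * (t + c) * v * (u * (t - c') * v) = u * ((t + c) * (t - c')) * v := by
    simp only [mul_assoc]
    rw [cancel_mid hvu]
  rw [e3, h0, mul_zero, zero_mul]
/-! ### ZMod condition helpers -/

lemma fin_cond {k : ℕ} {i j : Fin k}
    (h1 : ((i : ℕ) : ZMod k) - ((j : ℕ) : ZMod k) ≠ 1) :
    (i : ℕ) ≠ ((j : ℕ) + 1) % k := by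
  intro e
  have hcast : (((i : ℕ)) : ZMod k) = ((((j : ℕ) + 1) % k : ℕ) : ZMod k) := by rw [e]
  exact h1 (by rw [hcast, ZMod.natCast_mod]; push_cast; ring)

/-! ### The left embedding ψ_L -/

section PsiL
variable (n k : ℕ) (hn : 2 ≤ n)

/-- The image of the generators of `Ĥ_k` under `ψ_L`. -/
def psiLfun : HGen k → Hecke n
  | .T i _ => if (i : ℕ) = 0 then TinvAsc hn k (n - 1) * HT hn 0 * Tdesc hn (n - 1) k
      else HT hn (i : ℕ)
  | .rho => Hrho n * Tdesc hn (n - 1) k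
  | .rhoInv => TinvAsc hn k (n - 1) * HrhoInv n

variable {n k}

set_option maxHeartbeats 1000000 in
lemma psiL_resp (hk1 : 1 ≤ k) (hk2 : k ≤ n - 1) ⦃x y : FreeAlgebra R (HGen k)⦄
    (hrel : HRel k x y) :
    FreeAlgebra.lift R (psiLfun n k hn) x = FreeAlgebra.lift R (psiLfun n k hn) y := by
  have huv : TinvAsc hn k (n - 1) * Tdesc hn (n - 1) k = 1 := TinvAsc_mul_Tdesc hn k (n - 1)
  have hvu : Tdesc hn (n - 1) k * TinvAsc hn k (n - 1) = 1 := Tdesc_mul_TinvAsc hn k (n - 1)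
  induction hrel with
  | quad i hk =>
    simp only [map_mul, map_add, map_sub, map_zero, FreeAlgebra.lift_ι_apply,
      AlgHom.commutes, psiLfun]
    by_cases hi : (i : ℕ) = 0
    · rw [if_pos hi]
      exact conj_quad (TinvAsc hn k (n - 1)) (Tdesc hn (n - 1) k) (HT hn 0)
        (algebraMap R (Hecke n) qR) (algebraMap R (Hecke n) qRinv) huv hvu
        (fun x => Algebra.commutes qR x) (fun x => Algebra.commutes qRinv x) (quad0 hn 0)
    · rw [if_neg hi]
      exact quad0 hn _
  | comm i j hk h1 h2 =>
    have hn3 : 2 < n := by omega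
    have f1 : (i : ℕ) ≠ ((j : ℕ) + 1) % k := fin_cond h1
    have f2 : (j : ℕ) ≠ ((i : ℕ) + 1) % k :=
      fin_cond (fun e => h2 (by linear_combination -e))
    have ha : (i : ℕ) < k := i.isLt
    have hb : (j : ℕ) < k := j.isLt
    have key : (i : ℕ) = (j : ℕ) ∨
        ((i : ℕ) + 2 ≤ (j : ℕ) ∧ (j : ℕ) + 2 ≤ (i : ℕ) + k) ∨
        ((j : ℕ) + 2 ≤ (i : ℕ) ∧ (i : ℕ) + 2 ≤ (j : ℕ) + k) := by
      rcases Nat.lt_or_ge ((j : ℕ) + 1) k with hb1 | hb1 <;>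
        rcases Nat.lt_or_ge ((i : ℕ) + 1) k with ha1 | ha1
      · rw [Nat.mod_eq_of_lt hb1] at f1; rw [Nat.mod_eq_of_lt ha1] at f2; omega
      · rw [Nat.mod_eq_of_lt hb1] at f1
        rw [show (i : ℕ) + 1 = k by omega, Nat.mod_self] at f2; omega
      · rw [show (j : ℕ) + 1 = k by omega, Nat.mod_self] at f1
        rw [Nat.mod_eq_of_lt ha1] at f2; omega
      · omega
    simp only [map_mul, FreeAlgebra.lift_ι_apply, psiLfun]
    by_cases hi : (i : ℕ) = 0 <;> by_cases hj : (j : ℕ) = 0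
    · rw [if_pos hi, if_pos hj]
    · rw [if_pos hi, if_neg hj]
      have hj2 : 2 ≤ (j : ℕ) ∧ (j : ℕ) + 2 ≤ k := by
        rcases key with e | ⟨e1, e2⟩ | ⟨e1, e2⟩ <;> omega
      have c1 : Commute (HT hn (j : ℕ)) (TinvAsc hn k (n - 1)) :=
        commute_TinvAsc hn _ fun m hm1 hm2 =>
          Tcomm hn3 (by omega) (by omega) (by omega) (by omega)
      have c2 : Commute (HT hn (j : ℕ)) (HT hn 0) :=
        (Tcomm hn3 (show 0 < n by omega) (by omega) (by omega) (by omega)).symm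
      have c3 : Commute (HT hn (j : ℕ)) (Tdesc hn (n - 1) k) :=
        commute_Tdesc hn _ fun m hm1 hm2 =>
          Tcomm hn3 (by omega) (by omega) (by omega) (by omega)
      exact (((c1.mul_right c2).mul_right c3).eq).symm
    · rw [if_neg hi, if_pos hj]
      have hi2 : 2 ≤ (i : ℕ) ∧ (i : ℕ) + 2 ≤ k := by
        rcases key with e | ⟨e1, e2⟩ | ⟨e1, e2⟩ <;> omega
      have c1 : Commute (HT hn (i : ℕ)) (TinvAsc hn k (n - 1)) :=
        commute_TinvAsc hn _ fun m hm1 hm2 =>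
          Tcomm hn3 (by omega) (by omega) (by omega) (by omega)
      have c2 : Commute (HT hn (i : ℕ)) (HT hn 0) :=
        (Tcomm hn3 (show 0 < n by omega) (by omega) (by omega) (by omega)).symm
      have c3 : Commute (HT hn (i : ℕ)) (Tdesc hn (n - 1) k) :=
        commute_Tdesc hn _ fun m hm1 hm2 =>
          Tcomm hn3 (by omega) (by omega) (by omega) (by omega)
      exact ((c1.mul_right c2).mul_right c3).eq
    · rw [if_neg hi, if_neg hj]
      rcases key with e | ⟨e1, e2⟩ | ⟨e1, e2⟩
      · rw [e]
      · exact (Tcomm hn3 (by omega) (by omega) (by omega) (by omega)).eq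
      · exact (Tcomm hn3 (by omega) (by omega) (by omega) (by omega)).symm.eq
  | braid i hk =>
    have hn3 : 2 < n := by omega
    simp only [map_mul, FreeAlgebra.lift_ι_apply, psiLfun]
    rcases Nat.lt_trichotomy (i : ℕ) 0 with hlt | h0 | hpos
    · omega
    · -- i = 0 : braid between w and T_1
      have hcyc : ((cyc i : Fin k) : ℕ) = 1 := by
        simp [cyc, h0, Nat.mod_eq_of_lt (show 1 < k by omega)]
      rw [hcyc, h0]
      rw [if_pos rfl, if_neg (by omega : (1 : ℕ) ≠ 0)]
      have c1 : Commute (HT hn 1) (Tdesc hn (n - 1) k) :=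
        commute_Tdesc hn _ fun m hm1 hm2 =>
          Tcomm hn3 (by omega) (by omega) (by omega) (by omega)
      have c2 : Commute (HT hn 1) (TinvAsc hn k (n - 1)) :=
        commute_TinvAsc hn _ fun m hm1 hm2 =>
          Tcomm hn3 (by omega) (by omega) (by omega) (by omega)
      have hmid : Tdesc hn (n - 1) k * HT hn 1 * TinvAsc hn k (n - 1) = HT hn 1 := by
        rw [← c1.eq, mul_assoc, hvu, mul_one]
      have key : (Tdesc hn (n - 1) k * HT hn 1 * TinvAsc hn k (n - 1)) * HT hn 0 *
            (Tdesc hn (n - 1) k * HT hn 1 * TinvAsc hn k (n - 1)) =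
          HT hn 0 * (Tdesc hn (n - 1) k * HT hn 1 * TinvAsc hn k (n - 1)) * HT hn 0 := by
        rw [hmid]
        exact (braid_nat hn3 0).symm
      exact (conj_braid _ _ _ _ huv hvu key).symm
    · -- i ≥ 1
      rcases Nat.lt_or_ge ((i : ℕ) + 1) k with hik | hik
      · -- middle case
        have hcyc : ((cyc i : Fin k) : ℕ) = (i : ℕ) + 1 := by
          simp [cyc, Nat.mod_eq_of_lt hik]
        rw [hcyc, if_neg (by omega : ¬ (i : ℕ) = 0), if_neg (by omega : ¬ (i : ℕ) + 1 = 0)]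
        exact braid_nat hn3 (i : ℕ)
      · -- i = k - 1
        have hik' : (i : ℕ) = k - 1 := by omega
        have hcyc : ((cyc i : Fin k) : ℕ) = 0 := by
          simp [cyc, show (i : ℕ) + 1 = k by omega]
        rw [hcyc, if_neg (by omega : ¬ (i : ℕ) = 0), if_pos rfl, hik']
        -- uLemma
        have eU := uLemma hn3 (n - 1 - k) (k - 1) (n - 1) (by omega) (by omega) (by omega)
        rw [show k - 1 + 1 = k by omega] at eU
        have eU' : Tdesc hn (n - 1) k * HT hn (k - 1) * TinvAsc hn k (n - 1) =
            TinvAsc hn (k - 1) (n - 1 - 1) * HT hn (n - 1) * Tdesc hn (n - 1 - 1) (k - 1) := by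
          rw [mul_assoc, eU, ← mul_assoc]
        have hT : HT hn n = HT hn 0 := HT_congr hn (by simp [Nat.mod_self])
        have hb := braid_nat hn3 (n - 1)
        rw [show n - 1 + 1 = n by omega, hT] at hb
        have hyu : HT hn 0 * TinvAsc hn (k - 1) (n - 1 - 1) =
            TinvAsc hn (k - 1) (n - 1 - 1) * HT hn 0 :=
          (commute_TinvAsc hn _ fun m hm1 hm2 =>
            Tcomm hn3 (show 0 < n by omega) (by omega) (by omega) (by omega)).eq
        have hyv : HT hn 0 * Tdesc hn (n - 1 - 1) (k - 1) =
            Tdesc hn (n - 1 - 1) (k - 1) * HT hn 0 :=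
          (commute_Tdesc hn _ fun m hm1 hm2 =>
            Tcomm hn3 (show 0 < n by omega) (by omega) (by omega) (by omega)).eq
        have key2 := conj_braid' (TinvAsc hn (k - 1) (n - 1 - 1)) (Tdesc hn (n - 1 - 1) (k - 1))
          (HT hn (n - 1)) (HT hn 0) (TinvAsc_mul_Tdesc hn (k - 1) (n - 1 - 1))
          (Tdesc_mul_TinvAsc hn (k - 1) (n - 1 - 1)) hyu hyv hb
        have key3 : (Tdesc hn (n - 1) k * HT hn (k - 1) * TinvAsc hn k (n - 1)) * HT hn 0 *
              (Tdesc hn (n - 1) k * HT hn (k - 1) * TinvAsc hn k (n - 1)) =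
            HT hn 0 * (Tdesc hn (n - 1) k * HT hn (k - 1) * TinvAsc hn k (n - 1)) * HT hn 0 := by
          rw [eU']; exact key2
        exact conj_braid _ _ _ _ huv hvu key3
  | rho_rhoInv =>
    simp only [map_mul, map_one, FreeAlgebra.lift_ι_apply, psiLfun]
    simp only [mul_assoc]
    rw [cancel_mid hvu]
    exact rho_mul_rhoInv n
  | rhoInv_rho =>
    simp only [map_mul, map_one, FreeAlgebra.lift_ι_apply, psiLfun]
    simp only [mul_assoc]
    rw [rhoInv_rho_cancel]
    exact huv
  | conj i hk =>
    have hn3 : 2 < n := by omega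
    simp only [map_mul, FreeAlgebra.lift_ι_apply, psiLfun]
    rcases Nat.lt_trichotomy (i : ℕ) 0 with hlt | h0 | hpos
    · omega
    · have hcyc : ((cyc i : Fin k) : ℕ) = 1 := by
        simp [cyc, h0, Nat.mod_eq_of_lt (show 1 < k by omega)]
      rw [hcyc, h0, if_pos rfl, if_neg (by omega : (1 : ℕ) ≠ 0)]
      simp only [mul_assoc]
      rw [cancel_mid hvu, cancel_mid hvu, ← mul_assoc]
      exact conj_nat hn 0
    · rcases Nat.lt_or_ge ((i : ℕ) + 1) k with hik | hik
      · have hcyc : ((cyc i : Fin k) : ℕ) = (i : ℕ) + 1 := by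
          simp [cyc, Nat.mod_eq_of_lt hik]
        rw [hcyc, if_neg (by omega : ¬ (i : ℕ) = 0), if_neg (by omega : ¬ (i : ℕ) + 1 = 0)]
        have c2 : Commute (HT hn (i : ℕ)) (TinvAsc hn k (n - 1)) :=
          commute_TinvAsc hn _ fun m hm1 hm2 =>
            Tcomm hn3 (by omega) (by omega) (by omega) (by omega)
        simp only [mul_assoc]
        rw [comm_swap c2, cancel_mid hvu, ← mul_assoc]
        exact conj_nat hn (i : ℕ)
      · have hik' : (i : ℕ) = k - 1 := by omega
        have hcyc : ((cyc i : Fin k) : ℕ) = 0 := by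
          simp [cyc, show (i : ℕ) + 1 = k by omega]
        rw [hcyc, if_neg (by omega : ¬ (i : ℕ) = 0), if_pos rfl, hik']
        have eU := uLemma hn3 (n - 1 - k) (k - 1) (n - 1) (by omega) (by omega) (by omega)
        rw [show k - 1 + 1 = k by omega] at eU
        have step1 : Hrho n * Tdesc hn (n - 1) k * HT hn (k - 1) *
              (TinvAsc hn k (n - 1) * HrhoInv n) =
            Hrho n * (TinvAsc hn (k - 1) (n - 1 - 1) *
              (HT hn (n - 1) * Tdesc hn (n - 1 - 1) (k - 1))) * HrhoInv n := by
          rw [← eU]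
          simp only [mul_assoc]
        rw [step1, conj_mul3 _ _ _ _ _ (rhoInv_mul_rho n)]
        have r1 := rho_conj_TinvAsc hn (k - 1) (n - 1 - 1)
        rw [show k - 1 + 1 = k by omega, show n - 1 - 1 + 1 = n - 1 by omega] at r1
        have r2 := conj_nat hn (n - 1)
        rw [show n - 1 + 1 = n by omega, HT_congr hn (show n % n = 0 % n by simp)] at r2
        have r3 := rho_conj_Tdesc hn (n - 1 - 1) (k - 1)
        rw [show k - 1 + 1 = k by omega, show n - 1 - 1 + 1 = n - 1 by omega] at r3
        rw [r1, r2, r3, ← mul_assoc]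

end PsiL
section PsiLHom
variable {n k : ℕ} (hn : 2 ≤ n) (hk1 : 1 ≤ k) (hk2 : k ≤ n - 1)

/-- The left parabolic embedding `ψ_L`. -/
def psiL : Hecke k →ₐ[R] Hecke n :=
  RingQuot.liftAlgHom R ⟨FreeAlgebra.lift R (psiLfun n k hn), psiL_resp hn hk1 hk2⟩

lemma psiL_gen (g : HGen k) :
    psiL hn hk1 hk2 (RingQuot.mkAlgHom R (HRel k) (FreeAlgebra.ι R g)) = psiLfun n k hn g := by
  rw [psiL, RingQuot.liftAlgHom_mkAlgHom_apply, FreeAlgebra.lift_ι_apply]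

lemma psiL_isPsiL : IsPsiL n k hn (psiL hn hk1 hk2) := by
  refine ⟨?_, ?_, ?_⟩
  · intro hk i h1 h2
    rw [HT, psiL_gen]
    simp only [psiLfun]
    rw [Nat.mod_eq_of_lt (show i < k by omega), if_neg (show ¬ i = 0 by omega)]
  · intro hk
    rw [HT, psiL_gen]
    simp only [psiLfun]
    rw [Nat.zero_mod, if_pos rfl]
  · rw [Hrho, psiL_gen]
    rfl

lemma psiL_unique (f g : Hecke k →ₐ[R] Hecke n)
    (hf : IsPsiL n k hn f) (hg : IsPsiL n k hn g) : f = g := by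
  apply RingQuot.ringQuot_ext'
  apply FreeAlgebra.hom_ext
  funext gen
  simp only [AlgHom.coe_comp, Function.comp_apply]
  cases gen with
  | T i h =>
    rw [HT_fin h i]
    by_cases hi : (i : ℕ) = 0
    · rw [hi, hf.2.1 h, hg.2.1 h]
    · rw [hf.1 h (i : ℕ) (by omega) (by omega), hg.1 h (i : ℕ) (by omega) (by omega)]
  | rho =>
    rw [show RingQuot.mkAlgHom R (HRel k) (FreeAlgebra.ι R HGen.rho) = Hrho k from rfl,
      hf.2.2, hg.2.2]
  | rhoInv =>
    rw [show RingQuot.mkAlgHom R (HRel k) (FreeAlgebra.ι R HGen.rhoInv) = HrhoInv k from rfl]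
    have h1 : Hrho k * HrhoInv k = 1 := rho_mul_rhoInv k
    have h2 : HrhoInv k * Hrho k = 1 := rhoInv_mul_rho k
    have hfg : f (Hrho k) = g (Hrho k) := by rw [hf.2.2, hg.2.2]
    calc f (HrhoInv k) = f (HrhoInv k) * (g (Hrho k) * g (HrhoInv k)) := by
          rw [← map_mul, h1, map_one, mul_one]
      _ = f (HrhoInv k) * f (Hrho k) * g (HrhoInv k) := by rw [← hfg, mul_assoc]
      _ = g (HrhoInv k) := by rw [← map_mul, h2, map_one, one_mul]

end PsiLHom

/-! ### The right embedding ψ_R -/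

section PsiR
variable (n k m : ℕ) (hn : 2 ≤ n)

/-- The image of the generators of `Ĥ_m` under `ψ_R` (`m = n - k`). -/
def psiRfun : HGen m → Hecke n
  | .T j _ => if (j : ℕ) = 0 then Tasc hn 0 (k - 1) * HT hn k * TinvDesc hn (k - 1) 0
      else HT hn (k + (j : ℕ))
  | .rho => TinvDesc hn k 1 * Hrho n
  | .rhoInv => HrhoInv n * Tasc hn 1 k

variable {n k m}

set_option maxHeartbeats 1000000 in
lemma psiR_resp (hk1 : 1 ≤ k) (hkm : k + m = n) (hm1 : 1 ≤ m) ⦃x y : FreeAlgebra R (HGen m)⦄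
    (hrel : HRel m x y) :
    FreeAlgebra.lift R (psiRfun n k m hn) x = FreeAlgebra.lift R (psiRfun n k m hn) y := by
  have huv : TinvDesc hn k 1 * Tasc hn 1 k = 1 := TinvDesc_mul_Tasc hn 1 k
  have hvu : Tasc hn 1 k * TinvDesc hn k 1 = 1 := Tasc_mul_TinvDesc hn 1 k
  have huv2 : Tasc hn 0 (k - 1) * TinvDesc hn (k - 1) 0 = 1 := Tasc_mul_TinvDesc hn 0 (k - 1)
  have hvu2 : TinvDesc hn (k - 1) 0 * Tasc hn 0 (k - 1) = 1 := TinvDesc_mul_Tasc hn 0 (k - 1)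
  -- the two v-lemma identities, available as soon as `2 ≤ m`
  have eW : 2 ≤ m → Tasc hn 0 (k - 1) * HT hn k * TinvDesc hn (k - 1) 0 =
      TinvDesc hn k 1 * HT hn 0 * Tasc hn 1 k := by
    intro hm2
    have hn3 : 2 < n := by omega
    have e := vLemma hn3 (k - 1) 0 (k - 1) (by omega) (by omega) (by omega)
    rw [show k - 1 + 1 = k by omega] at e
    calc Tasc hn 0 (k - 1) * HT hn k * TinvDesc hn (k - 1) 0
        = Tasc hn 0 (k - 1) * (HT hn k * TinvDesc hn (k - 1) 0) := by rw [mul_assoc]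
      _ = TinvDesc hn k 1 * (HT hn 0 * Tasc hn 1 k) := e
      _ = TinvDesc hn k 1 * HT hn 0 * Tasc hn 1 k := by rw [mul_assoc]
  have eG : 2 ≤ m → Tasc hn 1 k * HT hn (k + 1) * TinvDesc hn k 1 =
      TinvDesc hn (k + 1) 2 * HT hn 1 * Tasc hn 2 (k + 1) := by
    intro hm2
    have hn3 : 2 < n := by omega
    have e := vLemma hn3 (k - 1) 1 k (by omega) (by omega) (by omega)
    rw [show (1 : ℕ) + 1 = 2 from rfl] at e
    calc Tasc hn 1 k * HT hn (k + 1) * TinvDesc hn k 1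
        = Tasc hn 1 k * (HT hn (k + 1) * TinvDesc hn k 1) := by rw [mul_assoc]
      _ = TinvDesc hn (k + 1) 2 * (HT hn 1 * Tasc hn 2 (k + 1)) := e
      _ = _ := by rw [mul_assoc]
  induction hrel with
  | quad j hm =>
    simp only [map_mul, map_add, map_sub, map_zero, FreeAlgebra.lift_ι_apply,
      AlgHom.commutes, psiRfun]
    by_cases hj : (j : ℕ) = 0
    · rw [if_pos hj]
      exact conj_quad (Tasc hn 0 (k - 1)) (TinvDesc hn (k - 1) 0) (HT hn k)
        (algebraMap R (Hecke n) qR) (algebraMap R (Hecke n) qRinv) huv2 hvu2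
        (fun x => Algebra.commutes qR x) (fun x => Algebra.commutes qRinv x) (quad0 hn k)
    · rw [if_neg hj]
      exact quad0 hn _
  | comm i j hm h1 h2 =>
    have hn3 : 2 < n := by omega
    have f1 : (i : ℕ) ≠ ((j : ℕ) + 1) % m := fin_cond h1
    have f2 : (j : ℕ) ≠ ((i : ℕ) + 1) % m :=
      fin_cond (fun e => h2 (by linear_combination -e))
    have ha : (i : ℕ) < m := i.isLt
    have hb : (j : ℕ) < m := j.isLt
    have key : (i : ℕ) = (j : ℕ) ∨
        ((i : ℕ) + 2 ≤ (j : ℕ) ∧ (j : ℕ) + 2 ≤ (i : ℕ) + m) ∨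
        ((j : ℕ) + 2 ≤ (i : ℕ) ∧ (i : ℕ) + 2 ≤ (j : ℕ) + m) := by
      rcases Nat.lt_or_ge ((j : ℕ) + 1) m with hb1 | hb1 <;>
        rcases Nat.lt_or_ge ((i : ℕ) + 1) m with ha1 | ha1
      · rw [Nat.mod_eq_of_lt hb1] at f1; rw [Nat.mod_eq_of_lt ha1] at f2; omega
      · rw [Nat.mod_eq_of_lt hb1] at f1
        rw [show (i : ℕ) + 1 = m by omega, Nat.mod_self] at f2; omega
      · rw [show (j : ℕ) + 1 = m by omega, Nat.mod_self] at f1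
        rw [Nat.mod_eq_of_lt ha1] at f2; omega
      · omega
    simp only [map_mul, FreeAlgebra.lift_ι_apply, psiRfun]
    by_cases hi : (i : ℕ) = 0 <;> by_cases hj : (j : ℕ) = 0
    · rw [if_pos hi, if_pos hj]
    · rw [if_pos hi, if_neg hj]
      have hj2 : 2 ≤ (j : ℕ) ∧ (j : ℕ) + 2 ≤ m := by
        rcases key with e | ⟨e1, e2⟩ | ⟨e1, e2⟩ <;> omega
      have c1 : Commute (HT hn (k + (j : ℕ))) (Tasc hn 0 (k - 1)) :=
        commute_Tasc hn _ fun p hp1 hp2 =>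
          (Tcomm hn3 (i := p) (j := k + (j : ℕ)) (by omega) (by omega) (by omega)
            (by omega)).symm
      have c2 : Commute (HT hn (k + (j : ℕ))) (HT hn k) :=
        (Tcomm hn3 (i := k) (j := k + (j : ℕ)) (by omega) (by omega) (by omega)
          (by omega)).symm
      have c3 : Commute (HT hn (k + (j : ℕ))) (TinvDesc hn (k - 1) 0) :=
        commute_TinvDesc hn _ fun p hp1 hp2 =>
          (Tcomm hn3 (i := p) (j := k + (j : ℕ)) (by omega) (by omega) (by omega)
            (by omega)).symm
      exact (((c1.mul_right c2).mul_right c3).eq).symm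
    · rw [if_neg hi, if_pos hj]
      have hi2 : 2 ≤ (i : ℕ) ∧ (i : ℕ) + 2 ≤ m := by
        rcases key with e | ⟨e1, e2⟩ | ⟨e1, e2⟩ <;> omega
      have c1 : Commute (HT hn (k + (i : ℕ))) (Tasc hn 0 (k - 1)) :=
        commute_Tasc hn _ fun p hp1 hp2 =>
          (Tcomm hn3 (i := p) (j := k + (i : ℕ)) (by omega) (by omega) (by omega)
            (by omega)).symm
      have c2 : Commute (HT hn (k + (i : ℕ))) (HT hn k) :=
        (Tcomm hn3 (i := k) (j := k + (i : ℕ)) (by omega) (by omega) (by omega)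
          (by omega)).symm
      have c3 : Commute (HT hn (k + (i : ℕ))) (TinvDesc hn (k - 1) 0) :=
        commute_TinvDesc hn _ fun p hp1 hp2 =>
          (Tcomm hn3 (i := p) (j := k + (i : ℕ)) (by omega) (by omega) (by omega)
            (by omega)).symm
      exact ((c1.mul_right c2).mul_right c3).eq
    · rw [if_neg hi, if_neg hj]
      rcases key with e | ⟨e1, e2⟩ | ⟨e1, e2⟩
      · rw [e]
      · exact (Tcomm hn3 (by omega) (by omega) (by omega) (by omega)).eq
      · exact (Tcomm hn3 (by omega) (by omega) (by omega) (by omega)).symm.eq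
  | braid j hm =>
    have hn3 : 2 < n := by omega
    have eW' := eW (by omega)
    simp only [map_mul, FreeAlgebra.lift_ι_apply, psiRfun]
    rcases Nat.lt_trichotomy (j : ℕ) 0 with hlt | h0 | hpos
    · omega
    · -- j = 0
      have hcyc : ((cyc j : Fin m) : ℕ) = 1 := by
        simp [cyc, h0, Nat.mod_eq_of_lt (show 1 < m by omega)]
      rw [hcyc, h0, if_pos rfl, if_neg (by omega : ¬ (1 : ℕ) = 0)]
      have eG' := eG (by omega)
      have hyu : HT hn 0 * TinvDesc hn (k + 1) 2 = TinvDesc hn (k + 1) 2 * HT hn 0 :=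
        (commute_TinvDesc hn _ fun p hp1 hp2 =>
          Tcomm hn3 (i := 0) (j := p) (by omega) (by omega) (by omega) (by omega)).eq
      have hyv : HT hn 0 * Tasc hn 2 (k + 1) = Tasc hn 2 (k + 1) * HT hn 0 :=
        (commute_Tasc hn _ fun p hp1 hp2 =>
          Tcomm hn3 (i := 0) (j := p) (by omega) (by omega) (by omega) (by omega)).eq
      have key2 := conj_braid' (TinvDesc hn (k + 1) 2) (Tasc hn 2 (k + 1)) (HT hn 1) (HT hn 0)
        (TinvDesc_mul_Tasc hn 2 (k + 1)) (Tasc_mul_TinvDesc hn 2 (k + 1)) hyu hyv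
        (braid_nat hn3 0).symm
      have key3 : (Tasc hn 1 k * HT hn (k + 1) * TinvDesc hn k 1) * HT hn 0 *
            (Tasc hn 1 k * HT hn (k + 1) * TinvDesc hn k 1) =
          HT hn 0 * (Tasc hn 1 k * HT hn (k + 1) * TinvDesc hn k 1) * HT hn 0 := by
        rw [eG']; exact key2
      have main := conj_braid (TinvDesc hn k 1) (Tasc hn 1 k) (HT hn (k + 1)) (HT hn 0)
        huv hvu key3
      rw [eW']
      exact main.symm
    · rcases Nat.lt_or_ge ((j : ℕ) + 1) m with hjm | hjm
      · -- middle case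
        have hcyc : ((cyc j : Fin m) : ℕ) = (j : ℕ) + 1 := by
          simp [cyc, Nat.mod_eq_of_lt hjm]
        rw [hcyc, if_neg (by omega : ¬ (j : ℕ) = 0), if_neg (by omega : ¬ (j : ℕ) + 1 = 0),
          show k + ((j : ℕ) + 1) = (k + (j : ℕ)) + 1 by omega]
        exact braid_nat hn3 (k + (j : ℕ))
      · -- j = m - 1
        have hcyc : ((cyc j : Fin m) : ℕ) = 0 := by
          simp [cyc, show (j : ℕ) + 1 = m by omega]
        rw [hcyc, if_neg (by omega : ¬ (j : ℕ) = 0), if_pos rfl,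
          show k + (j : ℕ) = n - 1 by omega]
        have hT : HT hn n = HT hn 0 := HT_congr hn (by simp [Nat.mod_self])
        have hb := braid_nat hn3 (n - 1)
        rw [show n - 1 + 1 = n by omega, hT] at hb
        have hyu : HT hn (n - 1) * TinvDesc hn k 1 = TinvDesc hn k 1 * HT hn (n - 1) :=
          (commute_TinvDesc hn (HT hn (n - 1)) fun p hp1 hp2 =>
            (Tcomm hn3 (i := p) (j := n - 1) (by omega) (by omega) (by omega)
              (by omega)).symm).eq
        have hyv : HT hn (n - 1) * Tasc hn 1 k = Tasc hn 1 k * HT hn (n - 1) :=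
          (commute_Tasc hn (HT hn (n - 1)) fun p hp1 hp2 =>
            (Tcomm hn3 (i := p) (j := n - 1) (by omega) (by omega) (by omega)
              (by omega)).symm).eq
        rw [eW']
        exact (conj_braid' (TinvDesc hn k 1) (Tasc hn 1 k) (HT hn 0) (HT hn (n - 1))
          huv hvu hyu hyv hb.symm).symm
  | rho_rhoInv =>
    simp only [map_mul, map_one, FreeAlgebra.lift_ι_apply, psiRfun]
    simp only [mul_assoc]
    rw [rho_rhoInv_cancel]
    exact huv
  | rhoInv_rho =>
    simp only [map_mul, map_one, FreeAlgebra.lift_ι_apply, psiRfun]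
    simp only [mul_assoc]
    rw [cancel_mid hvu]
    exact rhoInv_mul_rho n
  | conj j hm =>
    have hn3 : 2 < n := by omega
    have eW' := eW hm
    simp only [map_mul, FreeAlgebra.lift_ι_apply, psiRfun]
    rcases Nat.lt_trichotomy (j : ℕ) 0 with hlt | h0 | hpos
    · omega
    · -- j = 0
      have hcyc : ((cyc j : Fin m) : ℕ) = 1 := by
        simp [cyc, h0, Nat.mod_eq_of_lt (show 1 < m by omega)]
      rw [hcyc, h0, if_pos rfl, if_neg (by omega : ¬ (1 : ℕ) = 0), eW']
      have eG' := eG hm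
      have step1 : TinvDesc hn k 1 * Hrho n * (TinvDesc hn k 1 * HT hn 0 * Tasc hn 1 k) *
            (HrhoInv n * Tasc hn 1 k) =
          TinvDesc hn k 1 * (Hrho n * (TinvDesc hn k 1 * (HT hn 0 * Tasc hn 1 k)) * HrhoInv n) *
            Tasc hn 1 k := by
        simp only [mul_assoc]
      rw [step1, conj_mul3 _ _ _ _ _ (rhoInv_mul_rho n)]
      have r1 := rho_conj_TinvDesc hn k 1
      have r2 := conj_nat hn 0
      have r3 := rho_conj_Tasc hn 1 k
      rw [r1, r2, r3]
      have eG2 : TinvDesc hn (k + 1) (1 + 1) * (HT hn (0 + 1) * Tasc hn (1 + 1) (k + 1)) =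
          Tasc hn 1 k * (HT hn (k + 1) * TinvDesc hn k 1) := by
        rw [show (1 : ℕ) + 1 = 2 from rfl, show (0 : ℕ) + 1 = 1 from rfl]
        calc TinvDesc hn (k + 1) 2 * (HT hn 1 * Tasc hn 2 (k + 1))
            = TinvDesc hn (k + 1) 2 * HT hn 1 * Tasc hn 2 (k + 1) := by rw [mul_assoc]
          _ = Tasc hn 1 k * HT hn (k + 1) * TinvDesc hn k 1 := eG'.symm
          _ = Tasc hn 1 k * (HT hn (k + 1) * TinvDesc hn k 1) := by rw [mul_assoc]
      rw [eG2]
      calc TinvDesc hn k 1 * (Tasc hn 1 k * (HT hn (k + 1) * TinvDesc hn k 1)) * Tasc hn 1 k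
          = HT hn (k + 1) * (TinvDesc hn k 1 * Tasc hn 1 k) := by
            rw [cancel_mid huv]
            simp only [mul_assoc]
        _ = HT hn (k + 1) := by rw [huv, mul_one]
    · rcases Nat.lt_or_ge ((j : ℕ) + 1) m with hjm | hjm
      · -- middle
        have hcyc : ((cyc j : Fin m) : ℕ) = (j : ℕ) + 1 := by
          simp [cyc, Nat.mod_eq_of_lt hjm]
        rw [hcyc, if_neg (by omega : ¬ (j : ℕ) = 0), if_neg (by omega : ¬ (j : ℕ) + 1 = 0)]
        have step1 : TinvDesc hn k 1 * Hrho n * HT hn (k + (j : ℕ)) *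
              (HrhoInv n * Tasc hn 1 k) =
            TinvDesc hn k 1 * (Hrho n * HT hn (k + (j : ℕ)) * HrhoInv n) * Tasc hn 1 k := by
          simp only [mul_assoc]
        rw [step1, conj_nat hn (k + (j : ℕ))]
        have cc : Commute (TinvDesc hn k 1) (HT hn (k + (j : ℕ) + 1)) :=
          (commute_TinvDesc hn _ fun p hp1 hp2 =>
            (Tcomm hn3 (i := p) (j := k + (j : ℕ) + 1) (by omega) (by omega) (by omega)
              (by omega)).symm).symm
        rw [mul_assoc, comm_swap cc, huv, mul_one,
          show k + ((j : ℕ) + 1) = k + (j : ℕ) + 1 by omega]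
      · -- j = m - 1
        have hcyc : ((cyc j : Fin m) : ℕ) = 0 := by
          simp [cyc, show (j : ℕ) + 1 = m by omega]
        rw [hcyc, if_neg (by omega : ¬ (j : ℕ) = 0), if_pos rfl,
          show k + (j : ℕ) = n - 1 by omega, eW']
        have step1 : TinvDesc hn k 1 * Hrho n * HT hn (n - 1) * (HrhoInv n * Tasc hn 1 k) =
            TinvDesc hn k 1 * (Hrho n * HT hn (n - 1) * HrhoInv n) * Tasc hn 1 k := by
          simp only [mul_assoc]
        rw [step1, conj_nat hn (n - 1), show n - 1 + 1 = n by omega,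
          HT_congr hn (show n % n = 0 % n by simp)]

end PsiR

section PsiRHom
variable {n k m : ℕ} (hn : 2 ≤ n) (hk1 : 1 ≤ k) (hkm : k + m = n) (hm1 : 1 ≤ m)

/-- The right parabolic embedding `ψ_R`. -/
def psiR : Hecke m →ₐ[R] Hecke n :=
  RingQuot.liftAlgHom R ⟨FreeAlgebra.lift R (psiRfun n k m hn), psiR_resp hn hk1 hkm hm1⟩

lemma psiR_gen (g : HGen m) :
    psiR hn hk1 hkm hm1 (RingQuot.mkAlgHom R (HRel m) (FreeAlgebra.ι R g)) =
      psiRfun n k m hn g := by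
  rw [psiR, RingQuot.liftAlgHom_mkAlgHom_apply, FreeAlgebra.lift_ι_apply]

lemma psiR_isPsiR : IsPsiR n k m hn (psiR hn hk1 hkm hm1) := by
  refine ⟨?_, ?_, ?_⟩
  · intro hm j h1 h2
    rw [HT, psiR_gen]
    simp only [psiRfun]
    rw [Nat.mod_eq_of_lt (show j < m by omega), if_neg (show ¬ j = 0 by omega)]
  · intro hm
    rw [HT, psiR_gen]
    simp only [psiRfun]
    rw [Nat.zero_mod, if_pos rfl]
  · rw [Hrho, psiR_gen]
    rfl

lemma psiR_unique (f g : Hecke m →ₐ[R] Hecke n)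
    (hf : IsPsiR n k m hn f) (hg : IsPsiR n k m hn g) : f = g := by
  apply RingQuot.ringQuot_ext'
  apply FreeAlgebra.hom_ext
  funext gen
  simp only [AlgHom.coe_comp, Function.comp_apply]
  cases gen with
  | T j h =>
    rw [HT_fin h j]
    by_cases hj : (j : ℕ) = 0
    · rw [hj, hf.2.1 h, hg.2.1 h]
    · rw [hf.1 h (j : ℕ) (by omega) (by omega), hg.1 h (j : ℕ) (by omega) (by omega)]
  | rho =>
    rw [show RingQuot.mkAlgHom R (HRel m) (FreeAlgebra.ι R HGen.rho) = Hrho m from rfl,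
      hf.2.2, hg.2.2]
  | rhoInv =>
    rw [show RingQuot.mkAlgHom R (HRel m) (FreeAlgebra.ι R HGen.rhoInv) = HrhoInv m from rfl]
    have h1 : Hrho m * HrhoInv m = 1 := rho_mul_rhoInv m
    have h2 : HrhoInv m * Hrho m = 1 := rhoInv_mul_rho m
    have hfg : f (Hrho m) = g (Hrho m) := by rw [hf.2.2, hg.2.2]
    calc f (HrhoInv m) = f (HrhoInv m) * (g (Hrho m) * g (HrhoInv m)) := by
          rw [← map_mul, h1, map_one, mul_one]
      _ = f (HrhoInv m) * f (Hrho m) * g (HrhoInv m) := by rw [← hfg, mul_assoc]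
      _ = g (HrhoInv m) := by rw [← map_mul, h2, map_one, one_mul]

end PsiRHom

/-- **Statement 6.**  For all `n ≥ 2` and `1 ≤ k ≤ n - 1`, there exist unique unital
`R`-algebra homomorphisms `ψ_L : Ĥ_k → Ĥ_n` and `ψ_R : Ĥ_{n-k} → Ĥ_n` satisfying the
prescribed values on the generators. -/
theorem statement_6 (n k : ℕ) (hn : 2 ≤ n) (hk1 : 1 ≤ k) (hk2 : k ≤ n - 1) :
    (∃! f : Hecke k →ₐ[R] Hecke n, IsPsiL n k hn f) ∧
    (∃! g : Hecke (n - k) →ₐ[R] Hecke n, IsPsiR n k (n - k) hn g) := by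
  constructor
  · exact ⟨psiL hn hk1 hk2, psiL_isPsiL hn hk1 hk2,
      fun g hg => psiL_unique hn g (psiL hn hk1 hk2) hg (psiL_isPsiL hn hk1 hk2)⟩
  · have hkm : k + (n - k) = n := by omega
    have hm1 : 1 ≤ n - k := by omega
    exact ⟨psiR hn hk1 hkm hm1, psiR_isPsiR hn hk1 hkm hm1,
      fun g hg => psiR_unique hn g (psiR hn hk1 hkm hm1) hg (psiR_isPsiR hn hk1 hkm hm1)⟩

end ParabolicInduction
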